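/- Let $f$ be a standard probability density on $\mathbb{R}$ (mean 0, variance 1, everywhere positive, differentiable) and let $p(x; \mu, \sigma) = \frac{1}{\sigma} f\left(\frac{x-\mu}{\sigma}\right)$. Then the Wasserstein Riemannian metric $g^W_{ij}(\theta)$, defined by $C(p_\theta, p_{\theta + d\theta}) = \int_{-\infty}^{\infty} \frac{1}{p(x;\theta)} \left(\int_{-\infty}^x \delta p(y)\,dy\right)^2 dx$ with $\delta p = \partial_\mu p\, d\mu + \partial_\sigma p\, d\sigma$, is the identity matrix: $C(p_\theta, p_{\theta+d\theta}) = d\mu^2 + d\sigma^2$ for all $\theta = (\mu, \sigma)$ with $\sigma > 0$, regardless of $f$. -/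

import Mathlib

open MeasureTheory Set Filter

private lemma map_affine (m : ℝ) {s : ℝ} (hs : 0 < s) :
    Measure.map (fun y : ℝ => (y - m) / s) volume = ENNReal.ofReal s • volume := by
  have hs' : s ≠ 0 := ne_of_gt hs
  have h1 : (fun y : ℝ => (y - m) / s) = (fun y : ℝ => y * s⁻¹) ∘ (fun y : ℝ => y + (-m)) := by
    funext y; simp [div_eq_mul_inv, sub_eq_add_neg]
  rw [h1, ← Measure.map_map (measurable_id'.mul_const s⁻¹) (measurable_id'.add_const (-m)),
    map_add_right_eq_self volume (-m), Real.map_volume_mul_right (inv_ne_zero hs'),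
    inv_inv, abs_of_pos hs]

private lemma emb_affine (m : ℝ) {s : ℝ} (hs : 0 < s) :
    MeasurableEmbedding (fun y : ℝ => (y - m) / s) := by
  have hs' : (s : ℝ)⁻¹ ≠ 0 := inv_ne_zero (ne_of_gt hs)
  have h1 : (fun y : ℝ => (y - m) / s)
      = ⇑((Homeomorph.addRight (-m)).trans (Homeomorph.mulRight₀ s⁻¹ hs')) := by
    funext y; simp [div_eq_mul_inv, sub_eq_add_neg]
  rw [h1]; exact (Homeomorph.measurableEmbedding _)

private lemma comp_affine_Iic (h : ℝ → ℝ) (m : ℝ) {s : ℝ} (hs : 0 < s) (x : ℝ)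
    (hi : IntegrableOn h (Iic ((x - m) / s))) :
    IntegrableOn (fun y => h ((y - m) / s)) (Iic x) ∧
      ∫ y in Iic x, h ((y - m) / s) = s * ∫ z in Iic ((x - m) / s), h z := by
  have hs' : s ≠ 0 := ne_of_gt hs
  have hemb := emb_affine m hs
  have hpre : (fun y : ℝ => (y - m) / s) ⁻¹' (Iic ((x - m) / s)) = Iic x := by
    ext y
    simp only [mem_preimage, mem_Iic]
    rw [div_le_div_iff_of_pos_right hs, sub_le_sub_iff_right]
  have hmr : Measure.map (fun y : ℝ => (y - m) / s) (volume.restrict (Iic x)) =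
      (ENNReal.ofReal s) • (volume.restrict (Iic ((x - m) / s))) := by
    rw [← hpre, ← Measure.restrict_map hemb.measurable measurableSet_Iic, map_affine m hs,
      Measure.restrict_smul]
  constructor
  · have h2 : Integrable h ((ENNReal.ofReal s) • (volume.restrict (Iic ((x - m) / s)))) :=
      hi.smul_measure ENNReal.ofReal_ne_top
    rw [← hmr] at h2
    exact hemb.integrable_map_iff.1 h2
  · rw [show (∫ y in Iic x, h ((y - m) / s))
        = ∫ y, h y ∂(Measure.map (fun y : ℝ => (y - m) / s) (volume.restrict (Iic x)))
        from (hemb.integral_map h).symm, hmr,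
      integral_smul_measure, ENNReal.toReal_ofReal hs.le, smul_eq_mul]

private lemma comp_affine_univ (h : ℝ → ℝ) (m : ℝ) {s : ℝ} (hs : 0 < s)
    (hi : Integrable h) :
    Integrable (fun y => h ((y - m) / s)) ∧
      ∫ y, h ((y - m) / s) = s * ∫ z, h z := by
  have hemb := emb_affine m hs
  have hmr := map_affine m hs
  constructor
  · have h2 : Integrable h ((ENNReal.ofReal s) • (volume : Measure ℝ)) :=
      hi.smul_measure ENNReal.ofReal_ne_top
    rw [← hmr] at h2
    exact hemb.integrable_map_iff.1 h2
  · rw [show (∫ y, h ((y - m) / s))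
        = ∫ y, h y ∂(Measure.map (fun y : ℝ => (y - m) / s) volume)
        from (hemb.integral_map h).symm, hmr,
      integral_smul_measure, ENNReal.toReal_ofReal hs.le, smul_eq_mul]

theorem location_scale_W_metric_euclidean (f f' : ℝ → ℝ)
    (hf_pos : ∀ x, 0 < f x) (hf_int : Integrable f)
    (hf_tot : ∫ x, f x = 1)
    (hmean : Integrable (fun z => z * f z)) (hmean0 : ∫ z, z * f z = 0)
    (hvar : Integrable (fun z => z ^ 2 * f z)) (hvar1 : ∫ z, z ^ 2 * f z = 1)
    (hderiv : ∀ x, HasDerivAt f (f' x) x)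
    (hlim1 : Tendsto (fun x => x * f x) atBot (nhds 0))
    (hlim2 : Tendsto f atBot (nhds 0))
    (hint1 : ∀ x : ℝ, IntegrableOn f' (Iic x))
    (hint2 : ∀ x : ℝ, IntegrableOn (fun y => y * f' y) (Iic x))
    (μ σ : ℝ) (hσ : 0 < σ)
    (p : ℝ → ℝ) (hp : p = fun x => (1 / σ) * f ((x - μ) / σ))
    (dpdμ dpdσ : ℝ → ℝ)
    (hdpdμ : dpdμ = fun y => -(1 / σ ^ 2) * f' ((y - μ) / σ))
    (hdpdσ : dpdσ = fun y =>
      -(1 / σ ^ 3) * (σ * f ((y - μ) / σ) + (y - μ) * f' ((y - μ) / σ))) :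
    ∀ dμ dσ : ℝ,
      ∫ x, (1 / p x) * (∫ y in Iic x, (dpdμ y * dμ + dpdσ y * dσ)) ^ 2
        = dμ ^ 2 + dσ ^ 2 := by
  intro dμ dσ
  have hσ' : σ ≠ 0 := ne_of_gt hσ
  have hpx : ∀ x, 0 < p x := by
    intro x; rw [hp]; exact mul_pos (by positivity) (hf_pos _)
  -- FTC values
  have hF : ∀ c : ℝ, ∫ z in Iic c, f' z = f c := by
    intro c
    rw [integral_Iic_of_hasDerivAt_of_tendsto' (fun z _ => hderiv z) (hint1 c) hlim2, sub_zero]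
  have hG : ∀ c : ℝ, ∫ z in Iic c, (f z + z * f' z) = c * f c := by
    intro c
    have hd : ∀ z ∈ Iic c, HasDerivAt (fun z => z * f z) (f z + z * f' z) z := by
      intro z _
      have := (hasDerivAt_id' z).mul (hderiv z)
      rw [one_mul] at this
      exact this
    have hgi : IntegrableOn (fun z => f z + z * f' z) (Iic c) :=
      hf_int.integrableOn.add (hint2 c)
    rw [integral_Iic_of_hasDerivAt_of_tendsto' hd hgi hlim1, sub_zero]
  -- inner integrals
  have hμ1 := fun x : ℝ => comp_affine_Iic f' μ hσ x (hint1 _)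
  have hσ1 := fun x : ℝ => comp_affine_Iic (fun z => f z + z * f' z) μ hσ x
    (hf_int.integrableOn.add (hint2 _))
  have hdσ' : dpdσ = fun y => -(1 / σ ^ 2) *
      (f ((y - μ) / σ) + ((y - μ) / σ) * f' ((y - μ) / σ)) := by
    rw [hdpdσ]; funext y
    set c := (y - μ) / σ with hc
    have h1 : y - μ = σ * c := by rw [hc]; field_simp
    rw [h1]; field_simp
  have hinnerμ : ∀ x : ℝ, ∫ y in Iic x, dpdμ y = -(p x) := by
    intro x
    rw [hdpdμ]
    rw [MeasureTheory.integral_const_mul, (hμ1 x).2, hF]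
    simp only [hp]
    set c := (x - μ) / σ with hc
    field_simp
  have hinnerσ : ∀ x : ℝ, ∫ y in Iic x, dpdσ y = -(((x - μ) / σ) * p x) := by
    intro x
    rw [hdσ', MeasureTheory.integral_const_mul]
    rw [(hσ1 x).2, hG]
    simp only [hp]
    set c := (x - μ) / σ with hc
    field_simp
  have hinner : ∀ x : ℝ,
      (∫ y in Iic x, (dpdμ y * dμ + dpdσ y * dσ)) = -(p x) * (dμ + ((x - μ) / σ) * dσ) := by
    intro x
    have i1 : IntegrableOn dpdμ (Iic x) := by
      rw [hdpdμ]; exact (hμ1 x).1.const_mul _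
    have i2 : IntegrableOn dpdσ (Iic x) := by
      rw [hdσ']; exact (hσ1 x).1.const_mul _
    rw [MeasureTheory.integral_add (i1.mul_const _) (i2.mul_const _),
      MeasureTheory.integral_mul_const, MeasureTheory.integral_mul_const,
      hinnerμ x, hinnerσ x]
    ring
  -- pointwise integrand
  have hpoint : ∀ x : ℝ, (1 / p x) * (∫ y in Iic x, (dpdμ y * dμ + dpdσ y * dσ)) ^ 2
      = (1 / σ) * (f ((x - μ) / σ) * (dμ + ((x - μ) / σ) * dσ) ^ 2) := by
    intro x
    rw [hinner x]
    have hpx' : p x ≠ 0 := (hpx x).ne'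
    have hpval : p x = (1 / σ) * f ((x - μ) / σ) := by rw [hp]
    have key : (1 / p x) * (-(p x) * (dμ + ((x - μ) / σ) * dσ)) ^ 2
        = p x * (dμ + ((x - μ) / σ) * dσ) ^ 2 := by
      field_simp
    rw [key, hpval]
    set c := (x - μ) / σ with hc
    ring
  -- total mass of q
  have hqfun : (fun z => f z * (dμ + z * dσ) ^ 2)
      = fun z => (dμ ^ 2) * f z + (2 * dμ * dσ) * (z * f z) + (dσ ^ 2) * (z ^ 2 * f z) := by
    funext z; ring
  have hq : Integrable (fun z => f z * (dμ + z * dσ) ^ 2) := by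
    rw [hqfun]
    exact ((hf_int.const_mul _).add (hmean.const_mul _)).add (hvar.const_mul _)
  have hqtot : ∫ z, f z * (dμ + z * dσ) ^ 2 = dμ ^ 2 + dσ ^ 2 := by
    have i1 : Integrable (fun z : ℝ => dμ ^ 2 * f z) := hf_int.const_mul _
    have i2 : Integrable (fun z : ℝ => 2 * dμ * dσ * (z * f z)) := hmean.const_mul _
    have i3 : Integrable (fun z : ℝ => dσ ^ 2 * (z ^ 2 * f z)) := hvar.const_mul _
    have i12 : Integrable (fun z : ℝ => dμ ^ 2 * f z + 2 * dμ * dσ * (z * f z)) := i1.add i2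
    rw [hqfun, MeasureTheory.integral_add i12 i3, MeasureTheory.integral_add i1 i2,
      MeasureTheory.integral_const_mul, MeasureTheory.integral_const_mul,
      MeasureTheory.integral_const_mul, hf_tot, hmean0, hvar1]
    ring
  obtain ⟨hqint, hqval⟩ := comp_affine_univ (fun z => f z * (dμ + z * dσ) ^ 2) μ hσ hq
  calc ∫ x, (1 / p x) * (∫ y in Iic x, (dpdμ y * dμ + dpdσ y * dσ)) ^ 2
      = ∫ x, (1 / σ) * (f ((x - μ) / σ) * (dμ + ((x - μ) / σ) * dσ) ^ 2) :=
        integral_congr_ae (Eventually.of_forall hpoint)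
    _ = (1 / σ) * ∫ x, f ((x - μ) / σ) * (dμ + ((x - μ) / σ) * dσ) ^ 2 :=
        MeasureTheory.integral_const_mul _ _
    _ = (1 / σ) * (σ * (dμ ^ 2 + dσ ^ 2)) := by rw [hqval, hqtot]
    _ = dμ ^ 2 + dσ ^ 2 := by field_simp
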